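/- The function ϱ((γ₁, t₁), (γ₂, t₂)) = d_sup(γ̂₁, γ̂₂) + |t₁ − t₂|, where γ̂ᵢ extends γᵢ by its initial value to all of ℝ and d_sup(f, g) = Σ_{k=1}^{∞} 2^{−k} sup_{t ∈ [−k,k]} min(‖f(t) − g(t)‖, 1), defines a metric on the space Π of pairs (γ, t₀) with γ : [t₀, ∞) → ℝ^d continuous, and (Π, ϱ) is a complete metric space. -/

import Mathlib

open Filter

/-- A continuous path in `ℝ^d` with a starting time, represented by its
extension `γ̂ : ℝ → ℝ^d` which is constant before the starting time. -/
structure PathWithStart (d : ℕ) where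
  t0 : ℝ
  γ : ℝ → EuclideanSpace ℝ (Fin d)
  cont : Continuous γ
  const_before : ∀ t ≤ t0, γ t = γ t0

/-- The local-uniform distance
`d_sup(f,g) = Σ_k 2^{-k} sup_{t ∈ [-k,k]} min(‖f(t) − g(t)‖, 1)`. -/
noncomputable def dsup {d : ℕ} (f g : ℝ → EuclideanSpace ℝ (Fin d)) : ℝ :=
  ∑' k : ℕ, (1 / 2 : ℝ) ^ (k + 1) *
    sSup ((fun t => min (dist (f t) (g t)) 1) '' Set.Icc (-(k + 1 : ℝ)) (k + 1 : ℝ))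

/-- `ϱ((γ₁,t₁),(γ₂,t₂)) = d_sup(γ̂₁, γ̂₂) + |t₁ − t₂|`. -/
noncomputable def pathDist {d : ℕ} (p q : PathWithStart d) : ℝ :=
  dsup p.γ q.γ + |p.t0 - q.t0|

namespace StmtAux

variable {d : ℕ}

noncomputable def Mk (k : ℕ) (f g : ℝ → EuclideanSpace ℝ (Fin d)) : ℝ :=
  sSup ((fun t => min (dist (f t) (g t)) 1) '' Set.Icc (-(k + 1 : ℝ)) (k + 1 : ℝ))

lemma icc_nonempty (k : ℕ) : (Set.Icc (-(k + 1 : ℝ)) (k + 1 : ℝ)).Nonempty := by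
  have h : (0:ℝ) ≤ (k:ℝ) + 1 := by positivity
  exact ⟨0, by simp [Set.mem_Icc]; constructor <;> linarith⟩

lemma image_nonempty (k : ℕ) (f g : ℝ → EuclideanSpace ℝ (Fin d)) :
    ((fun t => min (dist (f t) (g t)) 1) '' Set.Icc (-(k + 1 : ℝ)) (k + 1 : ℝ)).Nonempty :=
  (icc_nonempty k).image _

lemma image_bdd (k : ℕ) (f g : ℝ → EuclideanSpace ℝ (Fin d)) :
    BddAbove ((fun t => min (dist (f t) (g t)) 1) '' Set.Icc (-(k + 1 : ℝ)) (k + 1 : ℝ)) := by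
  refine ⟨1, ?_⟩
  rintro x ⟨t, _, rfl⟩
  exact min_le_right _ _

lemma Mk_nonneg (k : ℕ) (f g : ℝ → EuclideanSpace ℝ (Fin d)) : 0 ≤ Mk k f g := by
  obtain ⟨t, ht⟩ := icc_nonempty k
  have h1 : (0:ℝ) ≤ min (dist (f t) (g t)) 1 := le_min dist_nonneg zero_le_one
  exact h1.trans (le_csSup (image_bdd k f g) ⟨t, ht, rfl⟩)

lemma Mk_le_one (k : ℕ) (f g : ℝ → EuclideanSpace ℝ (Fin d)) : Mk k f g ≤ 1 := by
  refine csSup_le (image_nonempty k f g) ?_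
  rintro x ⟨t, _, rfl⟩
  exact min_le_right _ _

lemma le_Mk {k : ℕ} {f g : ℝ → EuclideanSpace ℝ (Fin d)} {t : ℝ}
    (ht : t ∈ Set.Icc (-(k + 1 : ℝ)) (k + 1 : ℝ)) :
    min (dist (f t) (g t)) 1 ≤ Mk k f g :=
  le_csSup (image_bdd k f g) ⟨t, ht, rfl⟩

lemma Mk_le {k : ℕ} {f g : ℝ → EuclideanSpace ℝ (Fin d)} {δ : ℝ}
    (h : ∀ t ∈ Set.Icc (-(k + 1 : ℝ)) (k + 1 : ℝ), dist (f t) (g t) ≤ δ) :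
    Mk k f g ≤ δ := by
  refine csSup_le (image_nonempty k f g) ?_
  rintro x ⟨t, ht, rfl⟩
  exact (min_le_left _ _).trans (h t ht)

lemma dsup_eq (f g : ℝ → EuclideanSpace ℝ (Fin d)) :
    dsup f g = ∑' k : ℕ, (1 / 2 : ℝ) ^ (k + 1) * Mk k f g := rfl

lemma geom_summable : Summable (fun k : ℕ => (1 / 2 : ℝ) ^ (k + 1)) := by
  simpa [pow_succ] using summable_geometric_two.mul_right (1/2 : ℝ)

lemma geom_tsum : ∑' k : ℕ, (1 / 2 : ℝ) ^ (k + 1) = 1 := by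
  have : (fun k : ℕ => (1 / 2 : ℝ) ^ (k + 1)) = fun k : ℕ => (1 / 2 : ℝ) ^ k * (1 / 2) :=
    funext fun k => pow_succ _ _
  rw [this, tsum_mul_right, tsum_geometric_two]
  norm_num

lemma summable_terms (f g : ℝ → EuclideanSpace ℝ (Fin d)) :
    Summable (fun k : ℕ => (1 / 2 : ℝ) ^ (k + 1) * Mk k f g) := by
  refine Summable.of_nonneg_of_le (fun k => mul_nonneg (by positivity) (Mk_nonneg k f g)) (fun k => ?_) geom_summable
  · have := Mk_nonneg k f g
    calc (1 / 2 : ℝ) ^ (k + 1) * Mk k f g ≤ (1 / 2 : ℝ) ^ (k + 1) * 1 :=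
          mul_le_mul_of_nonneg_left (Mk_le_one k f g) (by positivity)
      _ = (1 / 2 : ℝ) ^ (k + 1) := mul_one _

lemma dsup_nonneg (f g : ℝ → EuclideanSpace ℝ (Fin d)) : 0 ≤ dsup f g := by
  rw [dsup_eq]
  exact tsum_nonneg fun k => mul_nonneg (by positivity) (Mk_nonneg k f g)

lemma term_le_dsup (f g : ℝ → EuclideanSpace ℝ (Fin d)) (k : ℕ) :
    (1 / 2 : ℝ) ^ (k + 1) * Mk k f g ≤ dsup f g := by
  rw [dsup_eq]
  exact Summable.le_tsum (summable_terms f g) k fun j _ => mul_nonneg (by positivity) (Mk_nonneg j f g)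

lemma dsup_symm (f g : ℝ → EuclideanSpace ℝ (Fin d)) : dsup f g = dsup g f := by
  rw [dsup_eq, dsup_eq]
  refine tsum_congr fun k => ?_
  have : (fun t => min (dist (f t) (g t)) 1) = fun t => min (dist (g t) (f t)) 1 :=
    funext fun t => by rw [dist_comm]
  rw [Mk, Mk, this]

lemma dsup_self (f : ℝ → EuclideanSpace ℝ (Fin d)) : dsup f f = 0 := by
  rw [dsup_eq]
  have h : ∀ k : ℕ, (1 / 2 : ℝ) ^ (k + 1) * Mk k f f = 0 := by
    intro k
    have h1 : (fun t => min (dist (f t) (f t)) 1) = fun _ : ℝ => (0:ℝ) :=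
      funext fun t => by simp
    rw [Mk, h1, (icc_nonempty k).image_const, csSup_singleton, mul_zero]
  exact (tsum_congr h).trans tsum_zero

lemma min1_triangle (a b c : EuclideanSpace ℝ (Fin d)) :
    min (dist a c) 1 ≤ min (dist a b) 1 + min (dist b c) 1 := by
  have h := dist_triangle a b c
  have hac1 : min (dist a c) 1 ≤ 1 := min_le_right _ _
  have hac2 : min (dist a c) 1 ≤ dist a c := min_le_left _ _
  have hab : 0 ≤ min (dist a b) 1 := le_min dist_nonneg zero_le_one
  have hbc : 0 ≤ min (dist b c) 1 := le_min dist_nonneg zero_le_one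
  rcases le_or_gt 1 (dist a b) with h1 | h1
  · rw [min_eq_right h1]; linarith
  rcases le_or_gt 1 (dist b c) with h2 | h2
  · rw [min_eq_right h2]; linarith
  rw [min_eq_left h1.le, min_eq_left h2.le]; linarith

lemma Mk_triangle (k : ℕ) (f g h : ℝ → EuclideanSpace ℝ (Fin d)) :
    Mk k f h ≤ Mk k f g + Mk k g h := by
  refine csSup_le (image_nonempty k f h) ?_
  rintro x ⟨t, ht, rfl⟩
  calc min (dist (f t) (h t)) 1 ≤ min (dist (f t) (g t)) 1 + min (dist (g t) (h t)) 1 :=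
        min1_triangle _ _ _
    _ ≤ Mk k f g + Mk k g h := add_le_add (le_Mk ht) (le_Mk ht)

lemma dsup_triangle (f g h : ℝ → EuclideanSpace ℝ (Fin d)) :
    dsup f h ≤ dsup f g + dsup g h := by
  rw [dsup_eq, dsup_eq, dsup_eq, ← Summable.tsum_add (summable_terms f g) (summable_terms g h)]
  refine Summable.tsum_le_tsum (fun k => ?_) (summable_terms f h)
    ((summable_terms f g).add (summable_terms g h))
  rw [← mul_add]
  exact mul_le_mul_of_nonneg_left (Mk_triangle k f g h) (by positivity)

lemma eq_of_dsup_eq_zero {f g : ℝ → EuclideanSpace ℝ (Fin d)} (h : dsup f g = 0) : f = g := by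
  funext t
  set k := ⌈|t|⌉₊ with hk
  have hkk : |t| ≤ (k:ℝ) + 1 := (Nat.le_ceil _).trans (by linarith)
  have ht : t ∈ Set.Icc (-(k + 1 : ℝ)) (k + 1 : ℝ) := by
    rw [Set.mem_Icc]
    constructor <;> [linarith [neg_abs_le t]; linarith [le_abs_self t]]
  have hterm := term_le_dsup f g k
  rw [h] at hterm
  have hp : (0:ℝ) < (1 / 2 : ℝ) ^ (k + 1) := by positivity
  have hMk0 : Mk k f g = 0 := le_antisymm (by nlinarith [Mk_nonneg k f g]) (Mk_nonneg k f g)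
  have hmin := le_Mk (f := f) (g := g) ht
  rw [hMk0] at hmin
  by_contra hne
  have hd : 0 < dist (f t) (g t) := dist_pos.mpr hne
  have : (0:ℝ) < min (dist (f t) (g t)) 1 := lt_min hd one_pos
  linarith

lemma dist_lt_of_dsup_lt {f g : ℝ → EuclideanSpace ℝ (Fin d)} {t : ℝ} {k : ℕ}
    (ht : t ∈ Set.Icc (-(k + 1 : ℝ)) (k + 1 : ℝ)) {ε : ℝ} (hε1 : ε ≤ 1)
    (h : dsup f g < (1 / 2 : ℝ) ^ (k + 1) * ε) : dist (f t) (g t) < ε := by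
  have h1 : (1 / 2 : ℝ) ^ (k + 1) * min (dist (f t) (g t)) 1 ≤ dsup f g :=
    le_trans (mul_le_mul_of_nonneg_left (le_Mk ht) (by positivity)) (term_le_dsup f g k)
  have hp : (0:ℝ) < (1 / 2 : ℝ) ^ (k + 1) := by positivity
  have h2 : min (dist (f t) (g t)) 1 < ε :=
    lt_of_mul_lt_mul_left (lt_of_le_of_lt h1 h) hp.le
  by_contra hcon
  push_neg at hcon
  exact absurd h2 (not_lt.mpr (le_min hcon hε1))

lemma Mk_mono {f g : ℝ → EuclideanSpace ℝ (Fin d)} {k K : ℕ} (h : k ≤ K) :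
    Mk k f g ≤ Mk K f g := by
  refine csSup_le_csSup (image_bdd K f g) (image_nonempty k f g) (Set.image_mono ?_)
  have : (k:ℝ) ≤ (K:ℝ) := Nat.cast_le.mpr h
  exact Set.Icc_subset_Icc (by linarith) (by linarith)

set_option maxHeartbeats 1000000 in
lemma dsup_le_Mk_add (f g : ℝ → EuclideanSpace ℝ (Fin d)) (K : ℕ) :
    dsup f g ≤ Mk K f g + (1 / 2 : ℝ) ^ (K + 1) := by
  have hs := summable_terms f g
  rw [dsup_eq, ← Summable.sum_add_tsum_nat_add (K + 1) hs]
  have hpart1 : ∑ k ∈ Finset.range (K + 1), (1 / 2 : ℝ) ^ (k + 1) * Mk k f g ≤ Mk K f g := by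
    calc ∑ k ∈ Finset.range (K + 1), (1 / 2 : ℝ) ^ (k + 1) * Mk k f g
        ≤ ∑ k ∈ Finset.range (K + 1), (1 / 2 : ℝ) ^ (k + 1) * Mk K f g := by
          refine Finset.sum_le_sum fun k hk => ?_
          exact mul_le_mul_of_nonneg_left
            (Mk_mono (Nat.lt_succ_iff.mp (Finset.mem_range.mp hk))) (by positivity)
      _ = (∑ k ∈ Finset.range (K + 1), (1 / 2 : ℝ) ^ (k + 1)) * Mk K f g := by
          rw [Finset.sum_mul]
      _ ≤ 1 * Mk K f g := by
          refine mul_le_mul_of_nonneg_right (le_trans ?_ (le_of_eq geom_tsum)) (Mk_nonneg K f g)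
          exact Summable.sum_le_tsum (Finset.range (K + 1)) (f := fun k : ℕ => (1 / 2 : ℝ) ^ (k + 1)) (fun i _ => by positivity) geom_summable
      _ = Mk K f g := one_mul _
  have hpart2 : ∑' k : ℕ, (1 / 2 : ℝ) ^ ((k + (K + 1)) + 1) * Mk (k + (K + 1)) f g
      ≤ (1 / 2 : ℝ) ^ (K + 1) := by
    have hb : ∀ k : ℕ, (1 / 2 : ℝ) ^ ((k + (K + 1)) + 1) * Mk (k + (K + 1)) f g
        ≤ (1 / 2 : ℝ) ^ (K + 1) * (1 / 2 : ℝ) ^ (k + 1) := by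
      intro k
      have h1 : (1 / 2 : ℝ) ^ ((k + (K + 1)) + 1) = (1 / 2 : ℝ) ^ (K + 1) * (1 / 2 : ℝ) ^ (k + 1) := by
        rw [← pow_add]; congr 1; omega
      rw [h1]
      calc (1 / 2 : ℝ) ^ (K + 1) * (1 / 2 : ℝ) ^ (k + 1) * Mk (k + (K + 1)) f g
          ≤ (1 / 2 : ℝ) ^ (K + 1) * (1 / 2 : ℝ) ^ (k + 1) * 1 :=
            mul_le_mul_of_nonneg_left (Mk_le_one _ f g) (by positivity)
        _ = (1 / 2 : ℝ) ^ (K + 1) * (1 / 2 : ℝ) ^ (k + 1) := mul_one _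
    calc ∑' k : ℕ, (1 / 2 : ℝ) ^ ((k + (K + 1)) + 1) * Mk (k + (K + 1)) f g
        ≤ ∑' k : ℕ, (1 / 2 : ℝ) ^ (K + 1) * (1 / 2 : ℝ) ^ (k + 1) :=
          Summable.tsum_le_tsum hb ((summable_nat_add_iff (K + 1)).mpr hs) (geom_summable.mul_left _)
      _ = (1 / 2 : ℝ) ^ (K + 1) * 1 := by rw [tsum_mul_left, geom_tsum]
      _ = (1 / 2 : ℝ) ^ (K + 1) := mul_one _
  linarith

end StmtAux

open StmtAux

theorem stmt15 (d : ℕ) :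
    (∀ p q : PathWithStart d, 0 ≤ pathDist p q) ∧
    (∀ p q : PathWithStart d, pathDist p q = pathDist q p) ∧
    (∀ p q : PathWithStart d, pathDist p q = 0 ↔ p = q) ∧
    (∀ p q r : PathWithStart d, pathDist p r ≤ pathDist p q + pathDist q r) ∧
    (∀ u : ℕ → PathWithStart d,
      (∀ ε : ℝ, 0 < ε → ∃ N : ℕ, ∀ m ≥ N, ∀ n ≥ N, pathDist (u m) (u n) < ε) →
      ∃ p : PathWithStart d,
        Tendsto (fun n => pathDist (u n) p) atTop (nhds 0)) := by
  refine ⟨fun p q => add_nonneg (dsup_nonneg _ _) (abs_nonneg _),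
    fun p q => by unfold pathDist; rw [dsup_symm, abs_sub_comm],
    fun p q => ?_, fun p q r => ?_, fun u hu => ?_⟩
  · constructor
    · intro h
      unfold pathDist at h
      have h1 : dsup p.γ q.γ = 0 := by
        have := dsup_nonneg p.γ q.γ
        have := abs_nonneg (p.t0 - q.t0)
        linarith
      have h2 : |p.t0 - q.t0| = 0 := by
        have := dsup_nonneg p.γ q.γ
        linarith
      have ht : p.t0 = q.t0 := by
        have := abs_eq_zero.mp h2
        linarith
      have hγ : p.γ = q.γ := eq_of_dsup_eq_zero h1
      cases p; cases q
      simp_all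
    · rintro rfl
      unfold pathDist
      rw [dsup_self]
      simp
  · unfold pathDist
    have h1 := dsup_triangle p.γ q.γ r.γ
    have h2 := abs_sub_le p.t0 q.t0 r.t0
    linarith
  · -- completeness
    have hdsup_le : ∀ m n, dsup (u m).γ (u n).γ ≤ pathDist (u m) (u n) :=
      fun m n => le_add_of_nonneg_right (abs_nonneg _)
    have habs_le : ∀ m n, |(u m).t0 - (u n).t0| ≤ pathDist (u m) (u n) :=
      fun m n => le_add_of_nonneg_left (dsup_nonneg _ _)
    -- starting times converge
    have ht0c : CauchySeq (fun n => (u n).t0) := by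
      rw [Metric.cauchySeq_iff]
      intro ε hε
      obtain ⟨N, hN⟩ := hu ε hε
      exact ⟨N, fun m hm n hn => by
        rw [Real.dist_eq]
        exact lt_of_le_of_lt (habs_le m n) (hN m hm n hn)⟩
    obtain ⟨T, hT⟩ := cauchySeq_tendsto_of_complete ht0c
    -- uniform Cauchy on compacts
    have hucauchy : ∀ (K : ℕ) (ε : ℝ), 0 < ε → ∃ N, ∀ m ≥ N, ∀ n ≥ N,
        ∀ t ∈ Set.Icc (-(K + 1 : ℝ)) (K + 1 : ℝ), dist ((u m).γ t) ((u n).γ t) < ε := by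
      intro K ε hε
      have hpos : (0:ℝ) < (1 / 2 : ℝ) ^ (K + 1) * min ε 1 := by
        have : (0:ℝ) < min ε 1 := lt_min hε one_pos
        positivity
      obtain ⟨N, hN⟩ := hu _ hpos
      refine ⟨N, fun m hm n hn t ht => ?_⟩
      have hd : dsup (u m).γ (u n).γ < (1 / 2 : ℝ) ^ (K + 1) * min ε 1 :=
        lt_of_le_of_lt (hdsup_le m n) (hN m hm n hn)
      exact lt_of_lt_of_le (dist_lt_of_dsup_lt ht (min_le_right ε 1) hd) (min_le_left ε 1)
    -- pointwise limit
    have hmemIcc : ∀ t : ℝ, t ∈ Set.Icc (-((⌈|t|⌉₊ : ℝ) + 1)) ((⌈|t|⌉₊ : ℝ) + 1) := by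
      intro t
      have h1 : |t| ≤ (⌈|t|⌉₊ : ℝ) := Nat.le_ceil _
      rw [Set.mem_Icc]
      constructor
      · linarith [neg_abs_le t]
      · linarith [le_abs_self t]
    have hpt : ∀ t : ℝ, CauchySeq (fun n => (u n).γ t) := by
      intro t
      rw [Metric.cauchySeq_iff]
      intro ε hε
      obtain ⟨N, hN⟩ := hucauchy ⌈|t|⌉₊ ε hε
      exact ⟨N, fun m hm n hn => hN m hm n hn t (hmemIcc t)⟩
    choose g hg using fun t => cauchySeq_tendsto_of_complete (hpt t)
    -- uniform convergence to g on compacts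
    have hunif : ∀ (K : ℕ) (ε : ℝ), 0 < ε → ∃ N, ∀ n ≥ N,
        ∀ t ∈ Set.Icc (-(K + 1 : ℝ)) (K + 1 : ℝ), dist ((u n).γ t) (g t) ≤ ε := by
      intro K ε hε
      obtain ⟨N, hN⟩ := hucauchy K ε hε
      refine ⟨N, fun n hn t ht => ?_⟩
      have hlim : Tendsto (fun m => dist ((u n).γ t) ((u m).γ t)) atTop
          (nhds (dist ((u n).γ t) (g t))) := tendsto_const_nhds.dist (hg t)
      exact le_of_tendsto hlim (eventually_atTop.mpr ⟨N, fun m hm => (hN n hn m hm t ht).le⟩)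
    -- continuity of g
    have hgc : Continuous g := by
      rw [continuous_iff_continuousAt]
      intro t
      set K := ⌈|t|⌉₊ with hK
      have hmem : t ∈ Set.Ioo (-(K + 1 : ℝ)) (K + 1 : ℝ) := by
        have h1 : |t| ≤ (K : ℝ) := Nat.le_ceil _
        rw [Set.mem_Ioo]
        constructor
        · have := neg_abs_le t; linarith
        · have := le_abs_self t; linarith
      have hto : TendstoUniformlyOn (fun n => (u n).γ) g atTop
          (Set.Icc (-(K + 1 : ℝ)) (K + 1 : ℝ)) := by
        rw [Metric.tendstoUniformlyOn_iff]
        intro ε hε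
        obtain ⟨N, hN⟩ := hunif K (ε / 2) (by linarith)
        filter_upwards [eventually_ge_atTop N] with n hn t' ht'
        have := hN n hn t' ht'
        rw [dist_comm] at this
        linarith
      have hcon := hto.continuousOn (Eventually.of_forall fun n => (u n).cont.continuousOn).frequently
      exact hcon.continuousAt (Icc_mem_nhds hmem.1 hmem.2)
    -- the limit of the starting points of paths
    have hA : Tendsto (fun n => (u n).γ ((u n).t0)) atTop (nhds (g T)) := by
      rw [Metric.tendsto_atTop]
      intro ε hε
      set K := ⌈|T| + 1⌉₊ with hK
      have hTK : ∀ᶠ n in atTop, (u n).t0 ∈ Set.Icc (-(K + 1 : ℝ)) (K + 1 : ℝ) := by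
        have h1 : ∀ᶠ n in atTop, (u n).t0 ∈ Set.Ioo (T - 1) (T + 1) :=
          hT.eventually (Ioo_mem_nhds (by linarith) (by linarith))
        filter_upwards [h1] with n hn
        have h2 : |T| + 1 ≤ (K : ℝ) := Nat.le_ceil _
        rw [Set.mem_Icc]
        constructor
        · have := neg_abs_le T; have := hn.1; linarith
        · have := le_abs_self T; have := hn.2; linarith
      obtain ⟨N1, hN1⟩ := hunif K (ε / 3) (by linarith)
      have h2 : Tendsto (fun n => g ((u n).t0)) atTop (nhds (g T)) :=
        (hgc.tendsto T).comp hT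
      rw [Metric.tendsto_atTop] at h2
      obtain ⟨N2, hN2⟩ := h2 (ε / 3) (by linarith)
      obtain ⟨N3, hN3⟩ := eventually_atTop.mp hTK
      refine ⟨max N1 (max N2 N3), fun n hn => ?_⟩
      have hn1 : N1 ≤ n := le_trans (le_max_left _ _) hn
      have hn2 : N2 ≤ n := le_trans ((le_max_left _ _).trans (le_max_right _ _)) hn
      have hn3 : N3 ≤ n := le_trans ((le_max_right _ _).trans (le_max_right _ _)) hn
      have hb := hN1 n hn1 ((u n).t0) (hN3 n hn3)
      have hc := hN2 n hn2
      calc dist ((u n).γ ((u n).t0)) (g T)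
          ≤ dist ((u n).γ ((u n).t0)) (g ((u n).t0)) + dist (g ((u n).t0)) (g T) :=
            dist_triangle _ _ _
        _ < ε := by linarith
    -- g is constant before T
    have hconst : ∀ t ≤ T, g t = g T := by
      intro t ht
      rcases eq_or_lt_of_le ht with rfl | hlt
      · rfl
      · have hev : ∀ᶠ n in atTop, (u n).γ ((u n).t0) = (u n).γ t := by
          filter_upwards [hT.eventually (eventually_gt_nhds hlt)] with n hn
          exact ((u n).const_before t hn.le).symm
        exact tendsto_nhds_unique (hg t) (Tendsto.congr' hev hA)
    refine ⟨⟨T, g, hgc, hconst⟩, ?_⟩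
    rw [Metric.tendsto_atTop]
    intro ε hε
    obtain ⟨K, hK⟩ : ∃ K : ℕ, (1 / 2 : ℝ) ^ (K + 1) < ε / 4 := by
      obtain ⟨K, hK⟩ := exists_pow_lt_of_lt_one (show (0:ℝ) < ε / 4 by linarith)
        (by norm_num : (1/2 : ℝ) < 1)
      refine ⟨K, lt_of_le_of_lt ?_ hK⟩
      have h0 : (0:ℝ) ≤ (1/2 : ℝ) ^ K := by positivity
      rw [pow_succ]
      nlinarith
    obtain ⟨N1, hN1⟩ := hunif K (ε / 4) (by linarith)
    rw [Metric.tendsto_atTop] at hT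
    obtain ⟨N2, hN2⟩ := hT (ε / 4) (by linarith)
    refine ⟨max N1 N2, fun n hn => ?_⟩
    have hn1 : N1 ≤ n := le_trans (le_max_left _ _) hn
    have hn2 : N2 ≤ n := le_trans (le_max_right _ _) hn
    have h1 : Mk K (u n).γ g ≤ ε / 4 := Mk_le fun t ht => hN1 n hn1 t ht
    have h2 : dsup (u n).γ g ≤ ε / 4 + (1 / 2 : ℝ) ^ (K + 1) :=
      le_trans (dsup_le_Mk_add _ _ K) (by linarith)
    have h3 : |(u n).t0 - T| < ε / 4 := by
      have := hN2 n hn2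
      rwa [Real.dist_eq] at this
    have h4 : pathDist (u n) ⟨T, g, hgc, hconst⟩ = dsup (u n).γ g + |(u n).t0 - T| := rfl
    have h5 : (0:ℝ) ≤ pathDist (u n) ⟨T, g, hgc, hconst⟩ :=
      add_nonneg (dsup_nonneg _ _) (abs_nonneg _)
    rw [Real.dist_eq, sub_zero, abs_of_nonneg h5, h4]
    linarith
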